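/- Let $t \ge 1$ be a fixed integer, $n$ a sufficiently large integer, and $k$ an integer with $n/\sqrt{t} \le k \le n^2/t^{5/2}$. Then every graph $G$ on $n$ vertices can be edge-decomposed into $k$ pairwise isomorphic $K_{t,t}$-forests together with a remainder of at most $4n^2/\sqrt{t}$ edges. -/

import Mathlib

/-- `(A, B)` spans a copy of `K_{t,t}` in `G`. -/
def IsKttCopy {V : Type*} (G : SimpleGraph V) (t : ℕ) (A B : Finset V) : Prop :=
  A.card = t ∧ B.card = t ∧ Disjoint A B ∧ ∀ x ∈ A, ∀ y ∈ B, G.Adj x y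

namespace KttAux

set_option linter.unusedSectionVars false
set_option maxHeartbeats 1000000

open Finset

lemma nat_core (t q n : ℕ) (ht : 1 ≤ t)
    (hq : 2^t * t.factorial * t * (2*t)^t + 2*t ≤ q) (hn : n ≤ 2*t*q) :
    (t-1) * n.choose t < q * q.choose t := by
  have hq2t : 2*t ≤ q := le_trans (Nat.le_add_left _ _) hq
  have hq1 : 1 ≤ q := by omega
  have h1 : q ^ t ≤ 2^t * (q - t)^t := by
    calc q ^ t ≤ (2*(q-t))^t := Nat.pow_le_pow_left (by omega) t
    _ = 2^t * (q-t)^t := mul_pow ..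
  have h2 : (q - t)^t ≤ t.factorial * q.choose t := by
    calc (q-t)^t ≤ (q+1-t)^t := Nat.pow_le_pow_left (by omega) t
    _ ≤ q.descFactorial t := Nat.pow_sub_le_descFactorial q t
    _ = t.factorial * q.choose t := Nat.descFactorial_eq_factorial_mul_choose q t
  have h3 : n.choose t ≤ n ^ t := by
    have h := Nat.descFactorial_le_pow n t
    rw [Nat.descFactorial_eq_factorial_mul_choose] at h
    calc n.choose t ≤ t.factorial * n.choose t :=
          Nat.le_mul_of_pos_left _ t.factorial_pos
    _ ≤ n ^ t := h
  have hqt : 0 < q ^ t := Nat.pow_pos hq1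
  have key : 2^t * t.factorial * ((t-1) * n.choose t)
      < 2^t * t.factorial * (q * q.choose t) := by
    calc 2^t * t.factorial * ((t-1)*n.choose t)
        ≤ 2^t * t.factorial * (t * n^t) := by
          exact Nat.mul_le_mul_left _ (Nat.mul_le_mul (by omega) h3)
      _ ≤ 2^t * t.factorial * (t * (2*t*q)^t) := by
          exact Nat.mul_le_mul_left _ (Nat.mul_le_mul_left _ (Nat.pow_le_pow_left hn t))
      _ = (2^t * t.factorial * t * (2*t)^t) * q^t := by rw [mul_pow]; ring
      _ < q * q^t := by
          have : 2^t * t.factorial * t * (2*t)^t < q := by omega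
          exact Nat.mul_lt_mul_of_lt_of_le this (le_refl _) hqt
      _ ≤ q * (2^t * ((q-t)^t)) := Nat.mul_le_mul_left q h1
      _ ≤ q * (2^t * (t.factorial * q.choose t)) :=
          Nat.mul_le_mul_left q (Nat.mul_le_mul_left _ h2)
      _ = 2^t * t.factorial * (q * q.choose t) := by ring
  exact Nat.lt_of_mul_lt_mul_left key

variable {V : Type} [Fintype V] [DecidableEq V]

/-- edge set of a complete bipartite pair -/
def cE (A B : Finset V) : Finset (Sym2 V) := (A ×ˢ B).image fun q => s(q.1, q.2)

lemma mem_cE {A B : Finset V} {e : Sym2 V} :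
    e ∈ cE A B ↔ ∃ a ∈ A, ∃ b ∈ B, e = s(a, b) := by
  simp [cE, Finset.mem_image, Finset.mem_product]
  constructor
  · rintro ⟨a, b, ⟨ha, hb⟩, rfl⟩; exact ⟨a, ha, b, hb, rfl⟩
  · rintro ⟨a, ha, b, hb, rfl⟩; exact ⟨a, b, ⟨ha, hb⟩, rfl⟩

lemma cE_subset_edgeFinset {G : SimpleGraph V} [DecidableRel G.Adj] {t : ℕ} {A B : Finset V}
    (h : IsKttCopy G t A B) : cE A B ⊆ G.edgeFinset := by
  intro e he
  rw [mem_cE] at he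
  obtain ⟨a, ha, b, hb, rfl⟩ := he
  rw [SimpleGraph.mem_edgeFinset, SimpleGraph.mem_edgeSet]
  exact h.2.2.2 a ha b hb

lemma cE_card {A B : Finset V} (hD : Disjoint A B) : (cE A B).card = A.card * B.card := by
  rw [cE, Finset.card_image_of_injOn, Finset.card_product]
  rintro ⟨a, b⟩ hab ⟨a', b'⟩ hab' h
  simp only [Finset.mem_coe, Finset.mem_product] at hab hab'
  simp only [Sym2.eq, Sym2.rel_iff', Prod.mk.injEq, Prod.swap_prod_mk] at h
  rcases h with ⟨rfl, rfl⟩ | ⟨rfl, rfl⟩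
  · rfl
  · exact (Finset.disjoint_left.mp hD hab.1 hab'.2).elim

lemma cE_disjoint {A B A' B' : Finset V} (h : Disjoint (A ∪ B) (A' ∪ B')) :
    Disjoint (cE A B) (cE A' B') := by
  rw [Finset.disjoint_left]
  intro e he he'
  rw [mem_cE] at he he'
  obtain ⟨a, ha, b, hb, rfl⟩ := he
  obtain ⟨a', ha', b', hb', h'⟩ := he'
  have haU : a ∈ A ∪ B := Finset.mem_union_left _ ha
  have : a ∈ A' ∪ B' := by
    simp only [Sym2.eq, Sym2.rel_iff', Prod.mk.injEq, Prod.swap_prod_mk] at h'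
    rcases h' with ⟨rfl, rfl⟩ | ⟨rfl, rfl⟩
    · exact Finset.mem_union_left _ ha'
    · exact Finset.mem_union_right _ hb'
  exact Finset.disjoint_left.mp h haU this


lemma kst (t : ℕ) (ht : 1 ≤ t) {V : Type} [Fintype V] [DecidableEq V]
    (H : SimpleGraph V) [DecidableRel H.Adj]
    (hn : t * (2^t * t.factorial * t * (2*t)^t + 2*t + 1) ≤ Fintype.card V)
    (he : (Fintype.card V : ℝ)^2 / Real.sqrt t ≤ (H.edgeFinset.card : ℝ)) :
    ∃ A B : Finset V, IsKttCopy H t A B := by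
  by_contra hcon
  push_neg at hcon
  set n := Fintype.card V with hncard
  have ht0 : (0:ℝ) < t := by positivity
  have hst1 : (1:ℝ) ≤ Real.sqrt t := Real.one_le_sqrt.mpr (by exact_mod_cast ht)
  have hst0 : (0:ℝ) < Real.sqrt t := lt_of_lt_of_le one_pos hst1
  have hn1 : 1 ≤ n := by
    have h0 : 0 < t * (2^t * t.factorial * t * (2*t)^t + 2*t + 1) :=
      Nat.mul_pos (by omega) (Nat.succ_pos _)
    omega
  have hn0 : (0:ℝ) < n := by exact_mod_cast hn1
  set x : ℝ := (n : ℝ) / Real.sqrt t with hx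
  have hx0 : 0 < x := div_pos hn0 hst0
  set d₀ : ℕ := ⌈x⌉₊ with hd₀
  set S : Finset V := univ.filter (fun v => d₀ ≤ H.degree v) with hS
  -- each vertex degree at most n
  have hdegn : ∀ v : V, H.degree v ≤ n := fun v => by
    rw [← SimpleGraph.card_neighborFinset_eq_degree]; exact Finset.card_le_univ _
  -- |S| ≥ d₀
  have hScard : d₀ ≤ S.card := by
    have hsum : ∑ v : V, H.degree v = 2 * H.edgeFinset.card :=
      SimpleGraph.sum_degrees_eq_twice_card_edges H
    have hsplit : ∑ v : V, (H.degree v : ℝ)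
        = ∑ v ∈ S, (H.degree v : ℝ) + ∑ v ∈ univ \ S, (H.degree v : ℝ) :=
      by rw [← Finset.sum_sdiff (Finset.subset_univ S)]; ring
    have hlow : ∀ v ∈ univ \ S, (H.degree v : ℝ) < x := by
      intro v hv
      simp only [hS, Finset.mem_sdiff, Finset.mem_filter, Finset.mem_univ, true_and,
        not_le] at hv
      have h1 : H.degree v + 1 ≤ d₀ := hv
      have h2 : (d₀ : ℝ) < x + 1 := Nat.ceil_lt_add_one (le_of_lt hx0)
      have : (H.degree v : ℝ) + 1 ≤ (d₀ : ℝ) := by exact_mod_cast h1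
      linarith
    have hSub : ∑ v ∈ univ \ S, (H.degree v : ℝ) ≤ (n : ℝ) * x := by
      calc ∑ v ∈ univ \ S, (H.degree v : ℝ) ≤ ∑ _v ∈ univ \ S, x :=
            Finset.sum_le_sum (fun v hv => le_of_lt (hlow v hv))
      _ = (univ \ S).card * x := by rw [Finset.sum_const, nsmul_eq_mul]
      _ ≤ (n : ℝ) * x := by
          apply mul_le_mul_of_nonneg_right _ (le_of_lt hx0)
          exact_mod_cast Finset.card_le_univ _
    have htot : 2 * (n:ℝ) * x ≤ ∑ v : V, (H.degree v : ℝ) := by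
      have : ∑ v : V, (H.degree v : ℝ) = 2 * (H.edgeFinset.card : ℝ) := by
        exact_mod_cast congrArg (Nat.cast (R := ℝ)) hsum
      rw [this]
      have : (n:ℝ) * x = (n:ℝ)^2 / Real.sqrt t := by
        rw [hx]; ring
      nlinarith [he]
    have hSsum : (n:ℝ) * x ≤ ∑ v ∈ S, (H.degree v : ℝ) := by linarith [hsplit ▸ htot]
    have hSup : ∑ v ∈ S, (H.degree v : ℝ) ≤ (S.card : ℝ) * n := by
      calc ∑ v ∈ S, (H.degree v : ℝ) ≤ ∑ _v ∈ S, (n : ℝ) :=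
            Finset.sum_le_sum (fun v _ => by exact_mod_cast hdegn v)
      _ = (S.card : ℝ) * n := by rw [Finset.sum_const, nsmul_eq_mul]
    have : x ≤ (S.card : ℝ) := by
      have h := le_trans hSsum hSup
      nlinarith
    exact Nat.ceil_le.mpr this
  -- pigeonhole bound on extensions
  set P : Finset (Finset V) := Finset.powersetCard t univ with hP
  have hext : ∀ T ∈ P, (S.filter (fun v => T ⊆ H.neighborFinset v)).card ≤ t - 1 := by
    intro T hT
    by_contra hc
    push_neg at hc
    have htc : t ≤ (S.filter (fun v => T ⊆ H.neighborFinset v)).card := by omega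
    obtain ⟨B, hBsub, hBcard⟩ := Finset.exists_subset_card_eq htc
    refine hcon T B ⟨(Finset.mem_powersetCard.mp hT).2, hBcard, ?_, ?_⟩
    · rw [Finset.disjoint_left]
      intro a haT haB
      have := (Finset.mem_filter.mp (hBsub haB)).2
      exact H.irrefl (H.mem_neighborFinset a a |>.mp (this haT))
    · intro a haT b hbB
      have := (Finset.mem_filter.mp (hBsub hbB)).2
      exact ((H.mem_neighborFinset b a).mp (this haT)).symm
  -- double counting
  have hcount : ∑ v ∈ S, (H.degree v).choose t
      = ∑ T ∈ P, (S.filter (fun v => T ⊆ H.neighborFinset v)).card := by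
    have h1 : ∀ v : V, (H.degree v).choose t
        = (P.filter (fun T => T ⊆ H.neighborFinset v)).card := by
      intro v
      have : P.filter (fun T => T ⊆ H.neighborFinset v)
          = Finset.powersetCard t (H.neighborFinset v) := by
        ext T
        simp only [Finset.mem_filter, hP, Finset.mem_powersetCard]
        constructor
        · rintro ⟨⟨_, hc⟩, hsub⟩; exact ⟨hsub, hc⟩
        · rintro ⟨hsub, hc⟩; exact ⟨⟨Finset.subset_univ T, hc⟩, hsub⟩
      rw [this, Finset.card_powersetCard, SimpleGraph.card_neighborFinset_eq_degree]
    calc ∑ v ∈ S, (H.degree v).choose t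
        = ∑ v ∈ S, (P.filter (fun T => T ⊆ H.neighborFinset v)).card := by
          exact Finset.sum_congr rfl (fun v _ => h1 v)
      _ = ∑ v ∈ S, ∑ T ∈ P, if T ⊆ H.neighborFinset v then 1 else 0 := by
          refine Finset.sum_congr rfl (fun v _ => ?_)
          rw [Finset.card_filter]
      _ = ∑ T ∈ P, ∑ v ∈ S, if T ⊆ H.neighborFinset v then 1 else 0 :=
          Finset.sum_comm
      _ = ∑ T ∈ P, (S.filter (fun v => T ⊆ H.neighborFinset v)).card := by
          refine Finset.sum_congr rfl (fun T _ => ?_)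
          rw [Finset.card_filter]
  -- upper bound
  have hup : ∑ v ∈ S, (H.degree v).choose t ≤ (t-1) * n.choose t := by
    rw [hcount]
    calc ∑ T ∈ P, (S.filter (fun v => T ⊆ H.neighborFinset v)).card
        ≤ ∑ _T ∈ P, (t-1) := Finset.sum_le_sum hext
      _ = P.card * (t-1) := by rw [Finset.sum_const, smul_eq_mul]
      _ = (t-1) * n.choose t := by
          rw [hP, Finset.card_powersetCard, Finset.card_univ, mul_comm, hncard]
  -- lower bound
  have hlowb : d₀ * d₀.choose t ≤ ∑ v ∈ S, (H.degree v).choose t := by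
    calc d₀ * d₀.choose t ≤ S.card * d₀.choose t :=
          Nat.mul_le_mul_right _ hScard
      _ = ∑ _v ∈ S, d₀.choose t := by rw [Finset.sum_const, smul_eq_mul]
      _ ≤ ∑ v ∈ S, (H.degree v).choose t := by
          refine Finset.sum_le_sum (fun v hv => ?_)
          exact Nat.choose_le_choose t (Finset.mem_filter.mp hv).2
  -- q := n / t
  set q : ℕ := n / t with hqdef
  have hqM : 2^t * t.factorial * t * (2*t)^t + 2*t ≤ q := by
    rw [hqdef, Nat.le_div_iff_mul_le (by omega : 0 < t)]
    calc (2^t * t.factorial * t * (2*t)^t + 2*t) * t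
        ≤ (2^t * t.factorial * t * (2*t)^t + 2*t + 1) * t := by
          exact Nat.mul_le_mul_right t (by omega)
      _ = t * (2^t * t.factorial * t * (2*t)^t + 2*t + 1) := mul_comm _ _
      _ ≤ n := hn
  have hq1 : 1 ≤ q := by
    have h2t : 2*t ≤ q := le_trans (Nat.le_add_left _ _) hqM
    omega
  have hn2tq : n ≤ 2*t*q := by
    have h1 : n < t * (q + 1) := Nat.lt_mul_div_succ n (by omega)
    have h2 : t * (q+1) ≤ 2*t*q := by
      have h3 : t * 1 ≤ t * q := Nat.mul_le_mul_left t hq1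
      calc t * (q+1) = t*q + t*1 := by ring
      _ ≤ t*q + t*q := by omega
      _ = 2*t*q := by ring
    omega
  have hqd₀ : q ≤ d₀ := by
    have h1 : (q : ℝ) ≤ (n : ℝ) / t := Nat.cast_div_le
    have h2 : (n : ℝ) / t ≤ x := by
      rw [hx]
      apply div_le_div_of_nonneg_left (le_of_lt hn0) hst0
      rw [Real.sqrt_le_left ht0.le]
      have h1t : (1:ℝ) ≤ (t:ℝ) := by exact_mod_cast ht
      nlinarith
    have h3 : x ≤ (d₀ : ℝ) := Nat.le_ceil x
    exact_mod_cast le_trans h1 (le_trans h2 h3)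
  have hfinal : q * q.choose t ≤ (t-1) * n.choose t := by
    calc q * q.choose t ≤ d₀ * d₀.choose t :=
          Nat.mul_le_mul hqd₀ (Nat.choose_le_choose t hqd₀)
      _ ≤ ∑ v ∈ S, (H.degree v).choose t := hlowb
      _ ≤ (t-1) * n.choose t := hup
  exact absurd hfinal (not_le.mpr (nat_core t q n ht hqM hn2tq))

/-- `H` with all edges meeting `F` removed. -/
def avoidG (H : SimpleGraph V) (F : Finset V) : SimpleGraph V where
  Adj x y := H.Adj x y ∧ x ∉ F ∧ y ∉ F
  symm := by constructor; rintro x y ⟨h, hx, hy⟩; exact ⟨h.symm, hy, hx⟩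
  loopless := by constructor; rintro x ⟨h, _, _⟩; exact H.loopless.irrefl x h

instance (H : SimpleGraph V) [DecidableRel H.Adj] (F : Finset V) :
    DecidableRel (avoidG H F).Adj := fun x y =>
  inferInstanceAs (Decidable (H.Adj x y ∧ x ∉ F ∧ y ∉ F))

lemma avoidG_le (H : SimpleGraph V) (F : Finset V) : avoidG H F ≤ H := fun _ _ h => h.1

lemma avoidG_edge_bound (H : SimpleGraph V) [DecidableRel H.Adj] (F : Finset V) :
    H.edgeFinset.card ≤ (avoidG H F).edgeFinset.card + F.card * Fintype.card V := by
  have hsub : H.edgeFinset ⊆ (avoidG H F).edgeFinset ∪ F.biUnion (fun v => H.incidenceFinset v) := by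
    intro e he
    induction e with
    | h x y =>
      rw [SimpleGraph.mem_edgeFinset, SimpleGraph.mem_edgeSet] at he
      by_cases hx : x ∈ F
      · exact Finset.mem_union_right _ (Finset.mem_biUnion.mpr ⟨x, hx, by
          rw [SimpleGraph.mem_incidenceFinset]
          exact ⟨(SimpleGraph.mem_edgeSet H).mpr he, Sym2.mem_mk_left x y⟩⟩)
      · by_cases hy : y ∈ F
        · exact Finset.mem_union_right _ (Finset.mem_biUnion.mpr ⟨y, hy, by
            rw [SimpleGraph.mem_incidenceFinset]
            exact ⟨(SimpleGraph.mem_edgeSet H).mpr he, Sym2.mem_mk_right x y⟩⟩)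
        · apply Finset.mem_union_left
          rw [SimpleGraph.mem_edgeFinset, SimpleGraph.mem_edgeSet]
          exact ⟨he, hx, hy⟩
  calc H.edgeFinset.card ≤ ((avoidG H F).edgeFinset ∪ F.biUnion (fun v => H.incidenceFinset v)).card :=
        Finset.card_le_card hsub
    _ ≤ (avoidG H F).edgeFinset.card + (F.biUnion (fun v => H.incidenceFinset v)).card :=
        Finset.card_union_le _ _
    _ ≤ (avoidG H F).edgeFinset.card + F.card * Fintype.card V := by
        apply Nat.add_le_add_left
        calc (F.biUnion (fun v => H.incidenceFinset v)).card ≤ ∑ v ∈ F, (H.incidenceFinset v).card :=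
              Finset.card_biUnion_le
          _ ≤ ∑ _v ∈ F, Fintype.card V := by
              refine Finset.sum_le_sum (fun v _ => ?_)
              rw [SimpleGraph.card_incidenceFinset_eq_degree]
              rw [← SimpleGraph.card_neighborFinset_eq_degree]
              exact Finset.card_le_univ _
          _ = F.card * Fintype.card V := by rw [Finset.sum_const, smul_eq_mul]

/-- delete a finite set of edges -/
def delE (H : SimpleGraph V) (D : Finset (Sym2 V)) : SimpleGraph V where
  Adj x y := H.Adj x y ∧ s(x,y) ∉ D
  symm := by
    constructor
    rintro x y ⟨h, hD⟩
    refine ⟨h.symm, ?_⟩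
    rwa [Sym2.eq_swap]
  loopless := by constructor; rintro x ⟨h, _⟩; exact H.loopless.irrefl x h

instance (H : SimpleGraph V) [DecidableRel H.Adj] (D : Finset (Sym2 V)) :
    DecidableRel (delE H D).Adj := fun x y =>
  inferInstanceAs (Decidable (H.Adj x y ∧ s(x,y) ∉ D))

lemma delE_edgeFinset (H : SimpleGraph V) [DecidableRel H.Adj] (D : Finset (Sym2 V)) :
    (delE H D).edgeFinset = H.edgeFinset \ D := by
  ext e
  induction e with
  | h x y =>
    simp only [SimpleGraph.mem_edgeFinset, Finset.mem_sdiff, SimpleGraph.mem_edgeSet]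
    exact Iff.rfl


lemma avoidG_adj (H : SimpleGraph V) (F : Finset V) (x y : V) :
    (avoidG H F).Adj x y ↔ H.Adj x y ∧ x ∉ F ∧ y ∉ F := Iff.rfl

def N₀ (t : ℕ) : ℕ := t * (2^t * t.factorial * t * (2*t)^t + 2*t + 1) + 2*t^2

lemma find_copy (t : ℕ) (ht : 1 ≤ t) (H : SimpleGraph V) [DecidableRel H.Adj] (F : Finset V)
    (hn : N₀ t ≤ Fintype.card V)
    (hF : (F.card : ℝ) ≤ (Fintype.card V : ℝ) / Real.sqrt t + 2*t)
    (he : 3 * (Fintype.card V : ℝ)^2 / Real.sqrt t ≤ (H.edgeFinset.card : ℝ)) :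
    ∃ A B : Finset V, IsKttCopy H t A B ∧ Disjoint (A ∪ B) F := by
  set n := Fintype.card V with hncard
  have ht1 : (1:ℝ) ≤ (t:ℝ) := by exact_mod_cast ht
  have hst1 : (1:ℝ) ≤ Real.sqrt t := Real.one_le_sqrt.mpr ht1
  have hst0 : (0:ℝ) < Real.sqrt t := lt_of_lt_of_le one_pos hst1
  have hstt : Real.sqrt t ≤ (t:ℝ) := by
    rw [Real.sqrt_le_left (by linarith)]; nlinarith
  have hn2t : 2*t^2 ≤ n := le_trans (Nat.le_add_left _ _) hn
  have hnr : (2:ℝ)*(t:ℝ)^2 ≤ (n:ℝ) := by exact_mod_cast hn2t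
  have hn0 : (0:ℝ) ≤ (n:ℝ) := by positivity
  -- edge count of avoided graph
  have hbound := avoidG_edge_bound H F
  have hbr : (H.edgeFinset.card : ℝ) ≤ ((avoidG H F).edgeFinset.card : ℝ) + F.card * n := by
    exact_mod_cast hbound
  have he' : (n : ℝ)^2 / Real.sqrt t ≤ ((avoidG H F).edgeFinset.card : ℝ) := by
    have h1 : (F.card : ℝ) * n ≤ ((n:ℝ)/Real.sqrt t + 2*t) * n :=
      mul_le_mul_of_nonneg_right hF hn0
    have h2 : 2*(t:ℝ)*(n:ℝ) ≤ (n:ℝ)^2 / Real.sqrt t := by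
      rw [le_div_iff₀ hst0]
      nlinarith [mul_le_mul_of_nonneg_left hstt (by positivity : (0:ℝ) ≤ 2*(t:ℝ)*(n:ℝ)),
        mul_le_mul_of_nonneg_right hnr hn0]
    have h3 : ((n:ℝ)/Real.sqrt t + 2*t) * n = (n:ℝ)^2/Real.sqrt t + 2*t*n := by
      field_simp
    have h4 : 3 * (n:ℝ)^2 / Real.sqrt t = 3 * ((n:ℝ)^2 / Real.sqrt t) := by ring
    nlinarith
  obtain ⟨A, B, hA, hB, hD, hAdj⟩ := kst t ht (avoidG H F) (le_trans (Nat.le_add_right _ _) hn) he'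
  have hBne : B.Nonempty := Finset.card_pos.mp (by omega)
  have hAne : A.Nonempty := Finset.card_pos.mp (by omega)
  refine ⟨A, B, ⟨hA, hB, hD, fun x hx y hy => ((avoidG_adj H F x y).mp (hAdj x hx y hy)).1⟩, ?_⟩
  rw [Finset.disjoint_left]
  intro a ha haF
  rcases Finset.mem_union.mp ha with haA | haB
  · obtain ⟨b, hb⟩ := hBne
    exact ((avoidG_adj H F a b).mp (hAdj a haA b hb)).2.1 haF
  · obtain ⟨b, hb⟩ := hAne
    exact ((avoidG_adj H F b a).mp (hAdj b hb a haB)).2.2 haF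

lemma forest_lemma (t : ℕ) (ht : 1 ≤ t) (hn : N₀ t ≤ Fintype.card V)
    (H : SimpleGraph V) [DecidableRel H.Adj]
    (he : 3 * (Fintype.card V : ℝ)^2 / Real.sqrt t ≤ (H.edgeFinset.card : ℝ)) :
    ∀ (s : ℕ) (F : Finset V),
    ((F.card : ℝ) + 2*t*s ≤ (Fintype.card V : ℝ) / Real.sqrt t + 2*t) →
    ∃ A B : Fin s → Finset V,
      (∀ j, IsKttCopy H t (A j) (B j)) ∧
      (∀ j, Disjoint (A j ∪ B j) F) ∧
      (∀ j j', j ≠ j' → Disjoint (A j ∪ B j) (A j' ∪ B j')) := by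
  intro s
  induction s with
  | zero =>
    intro F _
    exact ⟨Fin.elim0, Fin.elim0, fun j => j.elim0, fun j => j.elim0, fun j => j.elim0⟩
  | succ s ih =>
    intro F hF
    have ht0 : (0:ℝ) ≤ t := by positivity
    have hs0 : (0:ℝ) ≤ 2*(t:ℝ)*(s:ℝ) := by positivity
    have hF1 : (F.card : ℝ) ≤ (Fintype.card V : ℝ) / Real.sqrt t + 2*t := by
      push_cast at hF ⊢
      nlinarith
    obtain ⟨A₀, B₀, hcopy₀, hdisj₀⟩ := find_copy t ht H F hn hF1 he
    have hcard : ((F ∪ A₀ ∪ B₀).card : ℝ) + 2*t*s ≤ (Fintype.card V : ℝ) / Real.sqrt t + 2*t := by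
      have h1 : (F ∪ A₀ ∪ B₀).card ≤ F.card + A₀.card + B₀.card := by
        calc (F ∪ A₀ ∪ B₀).card ≤ (F ∪ A₀).card + B₀.card := Finset.card_union_le _ _
        _ ≤ F.card + A₀.card + B₀.card := by
            have := Finset.card_union_le F A₀; omega
      rw [hcopy₀.1, hcopy₀.2.1] at h1
      have h4 : ((F ∪ A₀ ∪ B₀).card : ℝ) ≤ (F.card : ℝ) + 2*t := by
        have := (Nat.cast_le (α := ℝ)).mpr h1
        push_cast at this ⊢
        linarith
      push_cast at hF ⊢
      nlinarith
    obtain ⟨A', B', hcopy', hdisjF', hpair'⟩ := ih (F ∪ A₀ ∪ B₀) hcard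
    have hsub0 : A₀ ∪ B₀ ⊆ F ∪ A₀ ∪ B₀ :=
      Finset.union_subset_union Finset.subset_union_right (subset_refl B₀)
    refine ⟨Fin.cons A₀ A', Fin.cons B₀ B', ?_, ?_, ?_⟩
    · refine Fin.cases ?_ ?_
      · simpa using hcopy₀
      · intro j'; simpa using hcopy' j'
    · refine Fin.cases ?_ ?_
      · simpa using hdisj₀
      · intro j'
        simp only [Fin.cons_succ]
        exact Finset.disjoint_of_subset_right
          (Finset.subset_union_left.trans Finset.subset_union_left) (hdisjF' j')
    · intro j j' hne
      induction j using Fin.cases with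
      | zero =>
        induction j' using Fin.cases with
        | zero => exact absurd rfl hne
        | succ j₂ =>
          simp only [Fin.cons_zero, Fin.cons_succ]
          exact Finset.disjoint_of_subset_left hsub0 (hdisjF' j₂).symm
      | succ j₁ =>
        induction j' using Fin.cases with
        | zero =>
          simp only [Fin.cons_zero, Fin.cons_succ]
          exact Finset.disjoint_of_subset_right hsub0 (hdisjF' j₁)
        | succ j₂ =>
          simp only [Fin.cons_succ]
          exact hpair' j₁ j₂ (fun h => hne (by rw [h]))

lemma delE_copy {H : SimpleGraph V} {D : Finset (Sym2 V)} {t : ℕ} {A B : Finset V}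
    (h : IsKttCopy (delE H D) t A B) : IsKttCopy H t A B :=
  ⟨h.1, h.2.1, h.2.2.1, fun x hx y hy => (h.2.2.2 x hx y hy).1⟩

lemma forests_lemma (t : ℕ) (ht : 1 ≤ t) (hn : N₀ t ≤ Fintype.card V) (s : ℕ)
    (hs : 2*(t:ℝ)*s ≤ (Fintype.card V : ℝ)/Real.sqrt t + 2*t) :
    ∀ (k : ℕ), ∀ (H : SimpleGraph V) [DecidableRel H.Adj],
    (3*(Fintype.card V:ℝ)^2/Real.sqrt t + k*s*t^2 ≤ (H.edgeFinset.card:ℝ)) →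
    ∃ A B : Fin k → Fin s → Finset V,
      (∀ i j, IsKttCopy H t (A i j) (B i j)) ∧
      (∀ i j j', j ≠ j' → Disjoint (A i j ∪ B i j) (A i j' ∪ B i j')) ∧
      (∀ i j i' j', (i, j) ≠ (i', j') →
        Disjoint (cE (A i j) (B i j)) (cE (A i' j') (B i' j'))) := by
  intro k
  induction k with
  | zero =>
    intro H _ _
    exact ⟨Fin.elim0, Fin.elim0, fun i => i.elim0, fun i => i.elim0, fun i => i.elim0⟩
  | succ k ih =>
    intro H hinst he
    have hkst : (0:ℝ) ≤ (k:ℝ)*(s:ℝ)*(t:ℝ)^2 := by positivity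
    have hst2 : (0:ℝ) ≤ (s:ℝ)*(t:ℝ)^2 := by positivity
    have he' : 3*(Fintype.card V:ℝ)^2/Real.sqrt t ≤ (H.edgeFinset.card:ℝ) := by
      push_cast at he ⊢; nlinarith
    obtain ⟨A₀, B₀, hcopy₀, _, hpair₀⟩ :=
      forest_lemma t ht hn H he' s ∅ (by simpa using hs)
    set D : Finset (Sym2 V) := univ.biUnion (fun j : Fin s => cE (A₀ j) (B₀ j)) with hD
    have hDsub : D ⊆ H.edgeFinset := by
      rw [hD]
      exact Finset.biUnion_subset.mpr (fun j _ => cE_subset_edgeFinset (hcopy₀ j))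
    have hDcard : D.card ≤ s * t^2 := by
      calc D.card ≤ ∑ j : Fin s, (cE (A₀ j) (B₀ j)).card := Finset.card_biUnion_le
        _ ≤ ∑ _j : Fin s, t^2 := by
            refine Finset.sum_le_sum (fun j _ => ?_)
            rw [cE_card (hcopy₀ j).2.2.1, (hcopy₀ j).1, (hcopy₀ j).2.1, sq]
        _ = s * t^2 := by rw [Finset.sum_const, smul_eq_mul, Finset.card_univ, Fintype.card_fin]
    have hE1 : (delE H D).edgeFinset = H.edgeFinset \ D := delE_edgeFinset H D
    have hE1card : (delE H D).edgeFinset.card = H.edgeFinset.card - D.card := by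
      rw [hE1, Finset.card_sdiff_of_subset hDsub]
    have he₁ : 3*(Fintype.card V:ℝ)^2/Real.sqrt t + k*s*t^2
        ≤ ((delE H D).edgeFinset.card:ℝ) := by
      have h1 : ((delE H D).edgeFinset.card:ℝ) = (H.edgeFinset.card:ℝ) - (D.card:ℝ) := by
        rw [hE1card, Nat.cast_sub (Finset.card_le_card hDsub)]
      have h2 : (D.card : ℝ) ≤ (s:ℝ)*(t:ℝ)^2 := by exact_mod_cast hDcard
      push_cast at he ⊢
      rw [h1]
      push_cast
      nlinarith
    obtain ⟨A', B', hcopy', hpairV', hpairE'⟩ := ih (delE H D) he₁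
    have hcE'sub : ∀ i j, cE (A' i j) (B' i j) ⊆ H.edgeFinset \ D := by
      intro i j
      rw [← hE1]
      exact cE_subset_edgeFinset (hcopy' i j)
    refine ⟨Fin.cons A₀ A', Fin.cons B₀ B', ?_, ?_, ?_⟩
    · intro i j
      induction i using Fin.cases with
      | zero => simpa using hcopy₀ j
      | succ i₁ => simpa using delE_copy (hcopy' i₁ j)
    · intro i j j' hne
      induction i using Fin.cases with
      | zero => simpa using hpair₀ j j' hne
      | succ i₁ => simpa using hpairV' i₁ j j' hne
    · intro i j i' j' hne
      induction i using Fin.cases with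
      | zero =>
        induction i' using Fin.cases with
        | zero =>
          have hjj : j ≠ j' := fun h => hne (by rw [h])
          simpa using cE_disjoint (hpair₀ j j' hjj)
        | succ i₂ =>
          simp only [Fin.cons_zero, Fin.cons_succ]
          have h1 : cE (A₀ j) (B₀ j) ⊆ D := by
            rw [hD]; exact Finset.subset_biUnion_of_mem (fun j : Fin s => cE (A₀ j) (B₀ j)) (Finset.mem_univ j)
          exact Finset.disjoint_of_subset_left h1
            (Finset.disjoint_of_subset_right (hcE'sub i₂ j')
              Finset.disjoint_sdiff)
      | succ i₁ =>
        induction i' using Fin.cases with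
        | zero =>
          simp only [Fin.cons_zero, Fin.cons_succ]
          have h1 : cE (A₀ j') (B₀ j') ⊆ D := by
            rw [hD]; exact Finset.subset_biUnion_of_mem (fun j : Fin s => cE (A₀ j) (B₀ j)) (Finset.mem_univ j')
          exact (Finset.disjoint_of_subset_left h1
            (Finset.disjoint_of_subset_right (hcE'sub i₁ j)
              Finset.disjoint_sdiff)).symm
        | succ i₂ =>
          simp only [Fin.cons_succ]
          refine hpairE' i₁ j i₂ j' (fun h => hne ?_)
          rw [Prod.mk.injEq] at h ⊢
          exact ⟨by rw [h.1], h.2⟩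

end KttAux

set_option maxHeartbeats 1000000

open KttAux Finset in
/-- Decomposition into `k` isomorphic `K_{t,t}`-forests: for fixed `t ≥ 1`, large `n`, and
`n/√t ≤ k ≤ n²/t^{5/2}`, every graph on `n` vertices decomposes into `k` pairwise isomorphic
`K_{t,t}`-forests (each consisting of `s` vertex-disjoint copies of `K_{t,t}`) and a
remainder of at most `4n²/√t` edges. -/
theorem isomorphic_Ktt_forest_decomposition (t : ℕ) (ht : 1 ≤ t) :
    ∃ n₀ : ℕ, ∀ n ≥ n₀, ∀ k : ℕ,
      (n : ℝ) / Real.sqrt t ≤ k → (k : ℝ) ≤ (n : ℝ) ^ 2 / (t : ℝ) ^ ((5 : ℝ) / 2) →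
      ∀ (V : Type) [Fintype V] [DecidableEq V], Fintype.card V = n →
      ∀ (G : SimpleGraph V) [DecidableRel G.Adj],
      ∃ (s : ℕ) (A B : Fin k → Fin s → Finset V),
        (∀ i j, IsKttCopy G t (A i j) (B i j)) ∧
        -- copies within the same forest are vertex-disjoint
        (∀ i j j', j ≠ j' → Disjoint (A i j ∪ B i j) (A i j' ∪ B i j')) ∧
        -- all copies are edge-disjoint
        (∀ i j i' j', (i, j) ≠ (i', j') →
          Disjoint ((A i j ×ˢ B i j).image fun q => s(q.1, q.2))
                   ((A i' j' ×ˢ B i' j').image fun q => s(q.1, q.2))) ∧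
        ((G.edgeFinset \ Finset.univ.biUnion (fun i : Fin k =>
            Finset.univ.biUnion fun j : Fin s =>
              (A i j ×ˢ B i j).image fun q => s(q.1, q.2))).card : ℝ)
          ≤ 4 * (n : ℝ) ^ 2 / Real.sqrt t := by
  refine ⟨N₀ t, ?_⟩
  intro n hn k hk1 hk2 V _ _ hVcard G _
  subst hVcard
  set n := Fintype.card V with hncard
  have ht1 : (1:ℝ) ≤ (t:ℝ) := by exact_mod_cast ht
  have ht0 : (0:ℝ) < (t:ℝ) := by linarith
  have hst1 : (1:ℝ) ≤ Real.sqrt t := Real.one_le_sqrt.mpr ht1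
  have hst0 : (0:ℝ) < Real.sqrt t := lt_of_lt_of_le one_pos hst1
  have hsq : Real.sqrt t * Real.sqrt t = (t:ℝ) := Real.mul_self_sqrt ht0.le
  have hn1 : 1 ≤ n := by
    have h0 : 0 < t * (2^t * t.factorial * t * (2*t)^t + 2*t + 1) :=
      Nat.mul_pos (by omega) (Nat.succ_pos _)
    have : 0 < N₀ t := by unfold N₀; omega
    omega
  have hn0 : (0:ℝ) < (n:ℝ) := by exact_mod_cast hn1
  have hk0 : (0:ℝ) < (k:ℝ) := lt_of_lt_of_le (div_pos hn0 hst0) hk1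
  -- k * t^2 ≤ n^2 / sqrt t
  have hrpow : (t:ℝ)^((5:ℝ)/2) = (t:ℝ)^2 * Real.sqrt t := by
    rw [Real.sqrt_eq_rpow, ← Real.rpow_natCast (t:ℝ) 2, ← Real.rpow_add ht0]
    norm_num
  have hkt2 : (k:ℝ) * (t:ℝ)^2 ≤ (n:ℝ)^2 / Real.sqrt t := by
    rw [hrpow] at hk2
    have ht2 : (0:ℝ) < (t:ℝ)^2 := by positivity
    rw [mul_comm, div_mul_eq_div_div] at hk2
    calc (k:ℝ) * (t:ℝ)^2 ≤ ((n:ℝ)^2/Real.sqrt t/(t:ℝ)^2) * (t:ℝ)^2 :=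
          mul_le_mul_of_nonneg_right hk2 ht2.le
    _ = (n:ℝ)^2 / Real.sqrt t := div_mul_cancel₀ _ ht2.ne'
  set m := G.edgeFinset.card with hm
  have hmtop : 2 * m ≤ n * n := by
    have h1 : ∑ v : V, G.degree v = 2 * m := SimpleGraph.sum_degrees_eq_twice_card_edges G
    have h2 : ∑ v : V, G.degree v ≤ ∑ _v : V, n :=
      Finset.sum_le_sum (fun v _ => by
        rw [← SimpleGraph.card_neighborFinset_eq_degree]; exact Finset.card_le_univ _)
    rw [Finset.sum_const, smul_eq_mul, Finset.card_univ, ← hncard] at h2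
    omega
  have hmr : (m:ℝ) ≤ (n:ℝ)*(n:ℝ)/2 := by
    have : ((2*m : ℕ):ℝ) ≤ ((n*n : ℕ):ℝ) := by exact_mod_cast hmtop
    push_cast at this
    linarith
  set c : ℝ := 4 * (n:ℝ)^2 / Real.sqrt t with hc
  have hc0 : (0:ℝ) ≤ c := by positivity
  have hPex : ∃ s : ℕ, (m:ℝ) ≤ c + k*s*t^2 := by
    refine ⟨m, ?_⟩
    have h1 : (1:ℝ) ≤ (k:ℝ) := by
      exact_mod_cast Nat.one_le_iff_ne_zero.mpr (by exact_mod_cast hk0.ne' : (k:ℕ) ≠ 0)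
    have hm0 : (0:ℝ) ≤ (m:ℝ) := Nat.cast_nonneg m
    have h2 : (m:ℝ) ≤ k*m := le_mul_of_one_le_left hm0 h1
    have h3 : (k:ℝ)*m ≤ k*m*t^2 := le_mul_of_one_le_right (by positivity) (by nlinarith)
    linarith
  classical
  have hPs₀ : (m:ℝ) ≤ c + k*(Nat.find hPex)*t^2 := Nat.find_spec hPex
  rcases Nat.eq_zero_or_pos (Nat.find hPex) with h0 | hpos
  · -- trivial case
    refine ⟨0, fun _ => Fin.elim0, fun _ => Fin.elim0, fun i j => j.elim0,
      fun i j => j.elim0, fun i j => j.elim0, ?_⟩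
    have hU : (Finset.univ.biUnion (fun i : Fin k =>
        Finset.univ.biUnion fun j : Fin 0 =>
          (Fin.elim0 (α := Finset V) j ×ˢ Fin.elim0 (α := Finset V) j).image
            fun q => s(q.1, q.2))) = (∅ : Finset (Sym2 V)) := by
      apply Finset.eq_empty_of_forall_notMem
      intro x hx
      simp at hx
    rw [hU, Finset.sdiff_empty]
    rw [h0] at hPs₀
    push_cast at hPs₀
    rw [hc] at hPs₀
    linarith
  · obtain ⟨s', hseq⟩ : ∃ s', Nat.find hPex = s' + 1 := ⟨Nat.find hPex - 1, by omega⟩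
    rw [hseq] at hPs₀
    have hnot : ¬ ((m:ℝ) ≤ c + k*s'*t^2) := Nat.find_min hPex (by omega)
    push_neg at hnot
    -- hypothesis 1 for forests_lemma
    have hyp1 : 3*(n:ℝ)^2/Real.sqrt t + k*((s'+1:ℕ):ℝ)*t^2 ≤ (m:ℝ) := by
      push_cast
      have h3 : c + (k:ℝ)*s'*t^2 = c - k*t^2 + k*(s'+1)*t^2 := by ring
      have h4 : 4*(n:ℝ)^2/Real.sqrt t - (n:ℝ)^2/Real.sqrt t = 3*(n:ℝ)^2/Real.sqrt t := by ring
      rw [hc] at hnot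
      linarith [hnot, hkt2]
    -- hypothesis 2
    have hA : (n:ℝ) ≤ k * Real.sqrt t := (div_le_iff₀ hst0).mp hk1
    have hB : (k:ℝ)*s'*t^2 ≤ (n:ℝ)*(n:ℝ)/2 := by
      rw [hc] at hnot
      have : (0:ℝ) ≤ 4 * (n:ℝ)^2 / Real.sqrt t := by positivity
      linarith
    have hs'0 : (0:ℝ) ≤ (s':ℝ) := Nat.cast_nonneg s'
    have hC : (n:ℝ) * (2*s'*t^2) ≤ Real.sqrt t * ((n:ℝ)*(n:ℝ)) := by
      nlinarith [mul_le_mul_of_nonneg_right hA (by positivity : (0:ℝ) ≤ 2*(s':ℝ)*(t:ℝ)^2),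
        mul_le_mul_of_nonneg_left hB (by positivity : (0:ℝ) ≤ 2*Real.sqrt t)]
    have hD : 2*(s':ℝ)*(t:ℝ)^2 ≤ Real.sqrt t * (n:ℝ) := by
      have h5 : (n:ℝ) * (2*(s':ℝ)*(t:ℝ)^2) ≤ (n:ℝ) * (Real.sqrt t * (n:ℝ)) := by
        calc (n:ℝ) * (2*(s':ℝ)*(t:ℝ)^2) ≤ Real.sqrt t * ((n:ℝ)*(n:ℝ)) := hC
        _ = (n:ℝ) * (Real.sqrt t * (n:ℝ)) := by ring
      exact le_of_mul_le_mul_left h5 hn0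
    have hyp2 : 2*(t:ℝ)*((s'+1:ℕ):ℝ) ≤ (n:ℝ)/Real.sqrt t + 2*t := by
      push_cast
      have h6 : 2*(t:ℝ)*(s':ℝ) ≤ (n:ℝ)/Real.sqrt t := by
        rw [le_div_iff₀ hst0]
        nlinarith [hD, hst0, hsq]
      linarith
    obtain ⟨A, B, hcopy, hpairV, hpairE⟩ :=
      forests_lemma t ht hn (s'+1) (by push_cast at hyp2 ⊢; linarith) k G hyp1
    refine ⟨s'+1, A, B, hcopy, hpairV, fun i j i' j' hne => hpairE i j i' j' hne, ?_⟩
    -- remainder count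
    set U : Finset (Sym2 V) := Finset.univ.biUnion (fun i : Fin k =>
        Finset.univ.biUnion fun j : Fin (s'+1) => cE (A i j) (B i j)) with hU
    have hUgoal : (Finset.univ.biUnion (fun i : Fin k =>
        Finset.univ.biUnion fun j : Fin (s'+1) =>
          (A i j ×ˢ B i j).image fun q => s(q.1, q.2))) = U := rfl
    rw [hUgoal]
    have hUsub : U ⊆ G.edgeFinset := by
      rw [hU]
      refine Finset.biUnion_subset.mpr (fun i _ => Finset.biUnion_subset.mpr (fun j _ => ?_))
      exact cE_subset_edgeFinset (hcopy i j)
    have hUcard : U.card = k * ((s'+1) * (t*t)) := by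
      rw [hU]
      rw [Finset.card_biUnion]
      · have hinner : ∀ i : Fin k, (Finset.univ.biUnion fun j : Fin (s'+1) =>
            cE (A i j) (B i j)).card = (s'+1) * (t*t) := by
          intro i
          rw [Finset.card_biUnion]
          · have : ∀ j : Fin (s'+1), (cE (A i j) (B i j)).card = t*t := fun j => by
              rw [cE_card (hcopy i j).2.2.1, (hcopy i j).1, (hcopy i j).2.1]
            rw [Finset.sum_congr rfl (fun j _ => this j), Finset.sum_const, smul_eq_mul,
              Finset.card_univ, Fintype.card_fin]
          · intro j _ j' _ hjj
            exact hpairE i j i j' (fun h => hjj (by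
              rw [Prod.mk.injEq] at h; exact h.2))
        rw [Finset.sum_congr rfl (fun i _ => hinner i), Finset.sum_const, smul_eq_mul,
          Finset.card_univ, Fintype.card_fin]
      · intro i _ i' _ hii
        rw [Function.onFun, Finset.disjoint_biUnion_left]
        intro j _
        rw [Finset.disjoint_biUnion_right]
        intro j' _
        exact hpairE i j i' j' (fun h => hii (by
          rw [Prod.mk.injEq] at h; exact h.1))
    have hUle : U.card ≤ m := Finset.card_le_card hUsub
    rw [Finset.card_sdiff_of_subset hUsub]
    rw [← hm, hUcard] at *
    have hcast : ((m - k * ((s'+1) * (t*t)) : ℕ) : ℝ) = (m:ℝ) - (k:ℝ)*((s'+1)*((t:ℝ)*(t:ℝ))) := by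
      rw [Nat.cast_sub hUle]
      push_cast
      ring
    rw [hcast]
    have : (k:ℝ)*((s'+1)*((t:ℝ)*(t:ℝ))) = (k:ℝ)*(((s'+1:ℕ):ℝ))*(t:ℝ)^2 := by push_cast; ring
    rw [this]
    rw [hc] at hPs₀
    push_cast at hPs₀ ⊢
    linarith
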